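/- For all integers n > 1, the integer complexity with subtraction satisfies 3·log_3(n) ≤ ‖n‖_− ≤ 6·log_6(n) + 5.890, and in particular ‖n‖_− < 3.679·log_3(n) + 5.890. Moreover, ‖n‖_− = 3·log_3(n) if and only if n is a power of 3. -/

import Mathlib

/-- `IsExprM n m` : the integer `n` is representable by an arithmetic expression
in basis `{1, +, ·, −}` containing exactly `m` ones. -/
inductive IsExprM : ℤ → ℕ → Prop
  | one : IsExprM 1 1
  | add {a b : ℤ} {m n : ℕ} : IsExprM a m → IsExprM b n → IsExprM (a + b) (m + n)
  | mul {a b : ℤ} {m n : ℕ} : IsExprM a m → IsExprM b n → IsExprM (a * b) (m + n)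
  | sub {a b : ℤ} {m n : ℕ} : IsExprM a m → IsExprM b n → IsExprM (a - b) (m + n)

/-- Integer complexity `‖n‖₋` in basis `{1, +, ·, −}`. -/
noncomputable def cpxM (n : ℤ) : ℕ := sInf {m | IsExprM n m}

section Aux

lemma one_le_ones {a : ℤ} {m : ℕ} (h : IsExprM a m) : 1 ≤ m := by
  induction h with
  | one => exact le_rfl
  | add _ _ ih1 ih2 => omega
  | mul _ _ ih1 ih2 => omega
  | sub _ _ ih1 ih2 => omega

lemma exprNat : ∀ n : ℕ, 1 ≤ n → IsExprM (n : ℤ) n := by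
  intro n
  induction n with
  | zero => omega
  | succ k ih =>
    intro _
    rcases Nat.eq_zero_or_pos k with hk | hk
    · subst hk; exact IsExprM.one
    · have := IsExprM.add (ih hk) IsExprM.one
      push_cast
      push_cast at this
      convert this using 2

lemma cpxM_le {n : ℤ} {m : ℕ} (h : IsExprM n m) : cpxM n ≤ m := Nat.sInf_le h

lemma cpxM_spec (n : ℕ) (hn : 1 ≤ n) : IsExprM (n : ℤ) (cpxM (n : ℤ)) :=
  Nat.sInf_mem ⟨n, exprNat n hn⟩

lemma exprTwo : IsExprM 2 2 := by
  have := IsExprM.add IsExprM.one IsExprM.one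
  norm_num at this
  exact this

lemma exprThree : IsExprM 3 3 := by
  have := IsExprM.add exprTwo IsExprM.one
  norm_num at this
  exact this

lemma exprSix : IsExprM 6 5 := by
  have := IsExprM.mul exprTwo exprThree
  norm_num at this
  exact this

lemma le_one_of_cube {x : ℕ} (h : x^3 ≤ 3) : x ≤ 1 := by
  by_contra hc
  push_neg at hc
  have : 2^3 ≤ x^3 := Nat.pow_le_pow_left hc 3
  omega

lemma addCube1 {y n : ℕ} (hy1 : 1 ≤ y) (hn : 1 ≤ n) (hy : y^3 ≤ 3^n) :
    (1+y)^3 ≤ 3^(1+n) := by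
  rcases le_or_gt y 3 with h | h
  · interval_cases y
    · have h9 : (9:ℕ) ≤ 3^(1+n) := by
        calc (9:ℕ) = 3^(1+1) := by norm_num
        _ ≤ 3^(1+n) := Nat.pow_le_pow_right (by norm_num) (by omega)
      omega
    · have h2 : 2 ≤ n := by
        by_contra hc
        push_neg at hc
        interval_cases n <;> omega
      have : (27:ℕ) ≤ 3^(1+n) := by
        calc (27:ℕ) = 3^(1+2) := by norm_num
        _ ≤ 3^(1+n) := Nat.pow_le_pow_right (by norm_num) (by omega)
      omega
    · have h3 : 3 ≤ n := by
        by_contra hc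
        push_neg at hc
        interval_cases n <;> omega
      have : (81:ℕ) ≤ 3^(1+n) := by
        calc (81:ℕ) = 3^(1+3) := by norm_num
        _ ≤ 3^(1+n) := Nat.pow_le_pow_right (by norm_num) (by omega)
      omega
  · have h4 : 4 ≤ y := h
    have a1 : 3*y+1 ≤ y*y := by nlinarith
    have a2 : 4*(y*y) ≤ y*(y*y) := by nlinarith
    have key : (1+y)^3 ≤ 3 * y^3 := by nlinarith
    calc (1+y)^3 ≤ 3 * y^3 := key
    _ ≤ 3 * 3^n := by omega
    _ = 3^(1+n) := by ring

lemma addCube {x y m n : ℕ} (hm : 1 ≤ m) (hn : 1 ≤ n)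
    (hx : x^3 ≤ 3^m) (hy : y^3 ≤ 3^n) : (x+y)^3 ≤ 3^(m+n) := by
  have h3m : 1 ≤ 3^m := Nat.one_le_pow _ _ (by norm_num)
  have h3n : 1 ≤ 3^n := Nat.one_le_pow _ _ (by norm_num)
  rcases Nat.eq_zero_or_pos x with hx0 | hx1
  · subst hx0
    calc (0+y)^3 = y^3 := by ring
    _ ≤ 3^n := hy
    _ ≤ 3^m * 3^n := Nat.le_mul_of_pos_left _ (by omega)
    _ = 3^(m+n) := (pow_add 3 m n).symm
  rcases Nat.eq_zero_or_pos y with hy0 | hy1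
  · subst hy0
    calc (x+0)^3 = x^3 := by ring
    _ ≤ 3^m := hx
    _ ≤ 3^m * 3^n := Nat.le_mul_of_pos_right _ (by omega)
    _ = 3^(m+n) := (pow_add 3 m n).symm
  rcases eq_or_lt_of_le hm with hm1 | hm2
  · have hx3 : x^3 ≤ 3 := by rw [← hm1] at hx; simpa using hx
    have hx1' : x = 1 := by have := le_one_of_cube hx3; omega
    subst hx1'
    rw [← hm1]
    exact addCube1 hy1 hn hy
  rcases eq_or_lt_of_le hn with hn1 | hn2
  · have hy3 : y^3 ≤ 3 := by rw [← hn1] at hy; simpa using hy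
    have hy1' : y = 1 := by have := le_one_of_cube hy3; omega
    subst hy1'
    have := addCube1 hx1 hm hx
    rw [← hn1]
    calc (x+1)^3 = (1+x)^3 := by ring
    _ ≤ 3^(1+m) := this
    _ = 3^(m+1) := by ring
  have h9m : 9 ≤ 3^m := by
    calc (9:ℕ) = 3^2 := by norm_num
    _ ≤ 3^m := Nat.pow_le_pow_right (by norm_num) hm2
  rw [pow_add]
  rcases le_total x y with hxy | hxy
  · calc (x+y)^3 ≤ (2*y)^3 := Nat.pow_le_pow_left (by omega) 3
    _ = 8*y^3 := by ring
    _ ≤ 8*3^n := by omega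
    _ ≤ 3^m*3^n := Nat.mul_le_mul (by omega) le_rfl
  · have h9n : 9 ≤ 3^n := by
      calc (9:ℕ) = 3^2 := by norm_num
      _ ≤ 3^n := Nat.pow_le_pow_right (by norm_num) hn2
    calc (x+y)^3 ≤ (2*x)^3 := Nat.pow_le_pow_left (by omega) 3
    _ = 8*x^3 := by ring
    _ ≤ 8*3^m := by omega
    _ ≤ 3^m*3^n := by
        calc 8*3^m = 3^m*8 := by ring
        _ ≤ 3^m*3^n := Nat.mul_le_mul le_rfl (by omega)

/-- the key counting bound : a value expressible with `m` ones has cube at most `3^m`. -/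
lemma cube_bound {a : ℤ} {m : ℕ} (h : IsExprM a m) : a.natAbs ^ 3 ≤ 3 ^ m := by
  induction h with
  | one => norm_num
  | add h1 h2 ih1 ih2 =>
      calc (_ + _ : ℤ).natAbs ^ 3 ≤ (_ + _ : ℕ) ^ 3 :=
        Nat.pow_le_pow_left (Int.natAbs_add_le _ _) 3
      _ ≤ 3 ^ (_ + _) := addCube (one_le_ones h1) (one_le_ones h2) ih1 ih2
  | mul h1 h2 ih1 ih2 =>
      rw [Int.natAbs_mul, mul_pow, pow_add]
      exact Nat.mul_le_mul ih1 ih2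
  | sub h1 h2 ih1 ih2 =>
      calc (_ - _ : ℤ).natAbs ^ 3 ≤ (_ + _ : ℕ) ^ 3 :=
        Nat.pow_le_pow_left (Int.natAbs_sub_le _ _) 3
      _ ≤ 3 ^ (_ + _) := addCube (one_le_ones h1) (one_le_ones h2) ih1 ih2

lemma cube_bound_nat (n : ℕ) (hn : 1 ≤ n) : n ^ 3 ≤ 3 ^ (cpxM (n : ℤ)) := by
  have := cube_bound (cpxM_spec n hn)
  simpa using this

end Aux
section Aux2

open Real

lemma lower_bound (n : ℕ) (hn : 1 ≤ n) : 3 * Real.logb 3 n ≤ (cpxM (n : ℤ) : ℝ) := by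
  have h := cube_bound_nat n hn
  have hc : ((n:ℝ)) ^ 3 ≤ (3:ℝ) ^ (cpxM (n:ℤ)) := by exact_mod_cast h
  have hnpos : (0:ℝ) < (n:ℝ)^3 := by positivity
  calc 3 * Real.logb 3 n = Real.logb 3 ((n:ℝ)^3) := by
        rw [Real.logb_pow]; push_cast; ring
  _ ≤ Real.logb 3 ((3:ℝ) ^ (cpxM (n:ℤ))) :=
        Real.logb_le_logb_of_le (by norm_num) hnpos hc
  _ = (cpxM (n:ℤ) : ℝ) := by
        rw [Real.logb_pow, Real.logb_self_eq_one (by norm_num)]; ring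

lemma expr3pow : ∀ j : ℕ, 1 ≤ j → IsExprM ((3:ℤ)^j) (3*j) := by
  intro j
  induction j with
  | zero => omega
  | succ k ih =>
    intro _
    rcases Nat.eq_zero_or_pos k with hk | hk
    · subst hk; simpa using exprThree
    · have := IsExprM.mul (ih hk) exprThree
      have e1 : (3:ℤ)^k * 3 = (3:ℤ)^(k+1) := by ring
      have e2 : 3*k + 3 = 3*(k+1) := by ring
      rw [e1, e2] at this
      exact this

lemma cpx3pow (j : ℕ) (hj : 1 ≤ j) : cpxM ((3:ℤ)^j) = 3*j := by
  refine le_antisymm (cpxM_le (expr3pow j hj)) ?_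
  have h1 : ((3:ℤ)^j) = (((3^j : ℕ)) : ℤ) := by push_cast; ring
  have h2 : ((3^j : ℕ)) ^ 3 ≤ 3 ^ (cpxM ((3:ℤ)^j)) := by
    rw [h1]
    exact cube_bound_nat _ (Nat.one_le_pow _ _ (by norm_num))
  have h3 : (3:ℕ) ^ (3*j) ≤ 3 ^ (cpxM ((3:ℤ)^j)) := by
    calc (3:ℕ)^(3*j) = ((3^j : ℕ))^3 := by rw [← pow_mul, Nat.mul_comm]
    _ ≤ _ := h2
  exact (Nat.pow_le_pow_iff_right (by norm_num)).mp h3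

end Aux2
section Aux3

lemma greedy_step (n : ℕ) (hn : 12 ≤ n) :
    ∃ k : ℕ, 2 ≤ k ∧ 6*k ≤ n+2 ∧ cpxM (n:ℤ) ≤ cpxM (k:ℤ) + 6 := by
  set q := n / 6 with hq
  have hq2 : 2 ≤ q := by omega
  have hr : n % 6 < 6 := Nat.mod_lt _ (by norm_num)
  have hnq : n = 6*q + n % 6 := by omega
  have e : IsExprM (q:ℤ) (cpxM (q:ℤ)) := cpxM_spec q (by omega)
  have e' : IsExprM ((q:ℤ)+1) (cpxM ((q+1 : ℕ):ℤ)) := by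
    have := cpxM_spec (q+1) (by omega)
    push_cast at this
    exact this
  interval_cases h : n % 6
  · refine ⟨q, hq2, by omega, ?_⟩
    have E := IsExprM.mul exprSix e
    have hv : (n:ℤ) = 6 * (q:ℤ) := by exact_mod_cast congrArg (Nat.cast : ℕ → ℤ) (by omega : n = 6*q)
    rw [← hv] at E
    have := cpxM_le E
    omega
  · refine ⟨q, hq2, by omega, ?_⟩
    have E := IsExprM.add (IsExprM.mul exprSix e) IsExprM.one
    have hv : (n:ℤ) = 6 * (q:ℤ) + 1 := by exact_mod_cast congrArg (Nat.cast : ℕ → ℤ) (by omega : n = 6*q+1)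
    rw [← hv] at E
    have := cpxM_le E
    omega
  · refine ⟨q, hq2, by omega, ?_⟩
    have E := IsExprM.mul exprTwo (IsExprM.add (IsExprM.mul exprThree e) IsExprM.one)
    have hv : (n:ℤ) = 2 * (3 * (q:ℤ) + 1) := by
      have : (n:ℤ) = 6 * (q:ℤ) + 2 := by exact_mod_cast congrArg (Nat.cast : ℕ → ℤ) (by omega : n = 6*q+2)
      linarith
    rw [← hv] at E
    have := cpxM_le E
    omega
  · refine ⟨q, hq2, by omega, ?_⟩
    have E := IsExprM.mul exprThree (IsExprM.add (IsExprM.mul exprTwo e) IsExprM.one)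
    have hv : (n:ℤ) = 3 * (2 * (q:ℤ) + 1) := by
      have : (n:ℤ) = 6 * (q:ℤ) + 3 := by exact_mod_cast congrArg (Nat.cast : ℕ → ℤ) (by omega : n = 6*q+3)
      linarith
    rw [← hv] at E
    have := cpxM_le E
    omega
  · refine ⟨q+1, by omega, by omega, ?_⟩
    have E := IsExprM.mul exprTwo (IsExprM.sub (IsExprM.mul exprThree e') IsExprM.one)
    have hv : (n:ℤ) = 2 * (3 * ((q:ℤ)+1) - 1) := by
      have : (n:ℤ) = 6 * (q:ℤ) + 4 := by exact_mod_cast congrArg (Nat.cast : ℕ → ℤ) (by omega : n = 6*q+4)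
      linarith
    rw [← hv] at E
    have := cpxM_le E
    omega
  · refine ⟨q+1, by omega, by omega, ?_⟩
    have E := IsExprM.sub (IsExprM.mul exprSix e') IsExprM.one
    have hv : (n:ℤ) = 6 * ((q:ℤ)+1) - 1 := by
      have : (n:ℤ) = 6 * (q:ℤ) + 5 := by exact_mod_cast congrArg (Nat.cast : ℕ → ℤ) (by omega : n = 6*q+5)
      linarith
    rw [← hv] at E
    have := cpxM_le E
    omega

end Aux3
section Aux4

lemma cpxM_le_self (n : ℕ) (hn : 1 ≤ n) : cpxM (n:ℤ) ≤ n := cpxM_le (exprNat n hn)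

lemma upper_aux : ∀ n : ℕ, 2 ≤ n → (cpxM (n:ℤ) : ℝ) ≤ 6 * Real.logb 6 ((n:ℝ) - 2/5) + 5.890 := by
  intro n
  induction n using Nat.strong_induction_on with
  | _ n ih =>
  intro hn
  have hn2 : (2:ℝ) ≤ (n:ℝ) := by exact_mod_cast hn
  rcases le_or_gt n 6 with h6 | h6
  · -- small cases : cpxM n ≤ 5
    have hc : cpxM (n:ℤ) ≤ 5 := by
      rcases eq_or_lt_of_le h6 with h6' | h6'
      · subst h6'
        have := cpxM_le exprSix
        have h66 : ((6:ℕ):ℤ) = 6 := by norm_num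
        rw [← h66] at this
        exact this
      · have := cpxM_le_self n (by omega)
        omega
    have hlog : 0 ≤ Real.logb 6 ((n:ℝ) - 2/5) :=
      Real.logb_nonneg (by norm_num) (by linarith)
    have : (cpxM (n:ℤ) : ℝ) ≤ 5 := by exact_mod_cast hc
    norm_num
    linarith
  rcases le_or_gt n 11 with h11 | h11
  · -- 7 ≤ n ≤ 11
    have hc : cpxM (n:ℤ) ≤ 11 := le_trans (cpxM_le_self n (by omega)) h11
    have hn7 : (7:ℝ) ≤ (n:ℝ) := by exact_mod_cast h6
    have hlog : 1 ≤ Real.logb 6 ((n:ℝ) - 2/5) := by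
      have h1 : Real.logb 6 (6:ℝ) ≤ Real.logb 6 ((n:ℝ) - 2/5) :=
        Real.logb_le_logb_of_le (by norm_num) (by norm_num) (by linarith)
      rwa [Real.logb_self_eq_one (by norm_num)] at h1
    have : (cpxM (n:ℤ) : ℝ) ≤ 11 := by exact_mod_cast hc
    norm_num
    linarith
  -- main case : n ≥ 12
  obtain ⟨k, hk2, hk6, hkc⟩ := greedy_step n (by omega)
  have hkn : k < n := by omega
  have ihk := ih k hkn hk2
  have hk2R : (2:ℝ) ≤ (k:ℝ) := by exact_mod_cast hk2
  have hkpos : (0:ℝ) < (k:ℝ) - 2/5 := by linarith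
  have hlog1 : Real.logb 6 (6*((k:ℝ)-2/5)) = Real.logb 6 ((k:ℝ)-2/5) + 1 := by
    rw [Real.logb_mul (by norm_num) (ne_of_gt hkpos), Real.logb_self_eq_one (by norm_num)]
    ring
  have hle : 6*((k:ℝ)-2/5) ≤ (n:ℝ)-2/5 := by
    have h1 : ((6*k:ℕ):ℝ) ≤ ((n+2:ℕ):ℝ) := by exact_mod_cast hk6
    push_cast at h1
    linarith
  have hlog2 : Real.logb 6 (6*((k:ℝ)-2/5)) ≤ Real.logb 6 ((n:ℝ)-2/5) :=
    Real.logb_le_logb_of_le (by norm_num) (by linarith) hle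
  have hcast : (cpxM (n:ℤ) : ℝ) ≤ (cpxM (k:ℤ) : ℝ) + 6 := by exact_mod_cast hkc
  norm_num at ihk ⊢
  linarith

end Aux4
/-- for all `n > 1`,
`3·log₃ n ≤ ‖n‖₋ ≤ 6·log₆ n + 5.890 < 3.679·log₃ n + 5.890`, and
`‖n‖₋ = 3·log₃ n` iff `n` is a power of `3`. -/
theorem stmt8 (n : ℕ) (hn : 1 < n) :
    3 * Real.logb 3 n ≤ (cpxM (n : ℤ) : ℝ) ∧
    (cpxM (n : ℤ) : ℝ) ≤ 6 * Real.logb 6 n + 5.890 ∧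
    (cpxM (n : ℤ) : ℝ) < 3.679 * Real.logb 3 n + 5.890 ∧
    ((cpxM (n : ℤ) : ℝ) = 3 * Real.logb 3 n ↔ ∃ m : ℕ, n = 3 ^ m) := by
  have hn2 : (2:ℝ) ≤ (n:ℝ) := by exact_mod_cast hn
  have hupper : (cpxM (n:ℤ) : ℝ) ≤ 6 * Real.logb 6 n + 5.890 := by
    have h1 := upper_aux n hn
    have h2 : Real.logb 6 ((n:ℝ) - 2/5) ≤ Real.logb 6 (n:ℝ) :=
      Real.logb_le_logb_of_le (by norm_num) (by linarith) (by linarith)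
    linarith
  refine ⟨lower_bound n (by omega), hupper, ?_, ?_⟩
  · -- strict bound
    have hl3 : 0 < Real.log 3 := Real.log_pos (by norm_num)
    have hl6 : 0 < Real.log 6 := Real.log_pos (by norm_num)
    have hln : 0 < Real.log (n:ℝ) := Real.log_pos (by linarith)
    have hbig : ((3:ℝ))^(6000:ℕ) < ((6:ℝ))^(3679:ℕ) := by
      exact_mod_cast (by set_option maxRecDepth 100000 in decide : (3:ℕ)^6000 < 6^3679)
    have hkey0 : Real.log ((3:ℝ)^(6000:ℕ)) < Real.log ((6:ℝ)^(3679:ℕ)) :=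
      Real.log_lt_log (by positivity) hbig
    rw [Real.log_pow, Real.log_pow] at hkey0
    push_cast at hkey0
    have hkey : 6 * Real.log 3 < 3.679 * Real.log 6 := by linarith
    have hmain : 6 * Real.logb 6 (n:ℝ) < 3.679 * Real.logb 3 (n:ℝ) := by
      rw [Real.logb, Real.logb, ← mul_div_assoc, ← mul_div_assoc,
        div_lt_div_iff₀ hl6 hl3]
      nlinarith [mul_lt_mul_of_pos_right hkey hln]
    linarith
  · constructor
    · -- equality implies power of three
      intro h
      set m := cpxM (n:ℤ) with hm
      have hml : Real.logb 3 ((n:ℝ)^(3:ℕ)) = (m:ℝ) := by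
        rw [Real.logb_pow]
        push_cast
        linarith
      have hpos : (0:ℝ) < (n:ℝ)^(3:ℕ) := by positivity
      have heq : (n:ℝ)^(3:ℕ) = (3:ℝ)^(m:ℕ) := by
        have h1 := Real.rpow_logb (by norm_num : (0:ℝ) < 3) (by norm_num) hpos
        rw [hml] at h1
        rw [← h1, Real.rpow_natCast]
      have hnat : n^3 = 3^m := by exact_mod_cast heq
      have hdvd : n ∣ 3^m := by
        rw [← hnat]
        exact dvd_pow_self n (by norm_num)
      obtain ⟨j, _, hj⟩ := (Nat.dvd_prime_pow Nat.prime_three).mp hdvd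
      exact ⟨j, hj⟩
    · -- power of three implies equality
      rintro ⟨j, rfl⟩
      have hj : 1 ≤ j := by
        by_contra hc
        push_neg at hc
        interval_cases j
        · omega
      have hcast : (((3:ℕ)^j : ℕ) : ℤ) = (3:ℤ)^j := by push_cast; ring
      have hcpx : cpxM (((3:ℕ)^j : ℕ) : ℤ) = 3*j := by
        rw [hcast]
        exact cpx3pow j hj
      have hlog : Real.logb 3 (((3:ℕ)^j : ℕ) : ℝ) = (j:ℝ) := by
        push_cast
        rw [Real.logb_pow, Real.logb_self_eq_one (by norm_num)]
        ring
      rw [hcpx, hlog]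
      push_cast
      ring
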